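/- arXiv:1210.8408 — 4 statements merged into one kernel-verified Lean document; each statement's English description precedes it below -/
import Mathlib

section
/- Let r_n = P_n/Q_n be the n-th subdiagonal Padé approximation to exp, with P_n(z) = Σ_{j=0}^{n} [(2n+1−j)!·n!/((2n+1)!·j!·(n−j)!)] z^j and Q_n(z) = Σ_{j=0}^{n+1} [(2n+1−j)!·(n+1)!/((2n+1)!·j!·(n+1−j)!)] (−z)^j. For every z ∈ ℂ with Q_n(z) ≠ 0, r_n(z) − e^z = ((−1)^(n+2)/Q_n(z)) · (1/(2n+1)!) · z^(2n+2) · e^z · ∫_0^1 s^n (1−s)^(n+1) e^{−sz} ds. -/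
open Finset
set_option maxRecDepth 8000

/-- Numerator of the n-th subdiagonal Padé approximation to the exponential. -/
noncomputable def padeP (n : ℕ) (z : ℂ) : ℂ :=
  ∑ j ∈ Finset.range (n + 1),
    ((Nat.factorial (2 * n + 1 - j) * Nat.factorial n : ℕ) : ℂ) /
      ((Nat.factorial (2 * n + 1) * Nat.factorial j * Nat.factorial (n - j) : ℕ) : ℂ) * z ^ j

/-- Denominator of the n-th subdiagonal Padé approximation to the exponential. -/
noncomputable def padeQ (n : ℕ) (z : ℂ) : ℂ :=
  ∑ j ∈ Finset.range (n + 2),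
    ((Nat.factorial (2 * n + 1 - j) * Nat.factorial (n + 1) : ℕ) : ℂ) /
      ((Nat.factorial (2 * n + 1) * Nat.factorial j * Nat.factorial (n + 1 - j) : ℕ) : ℂ) *
      (-z) ^ j

namespace PerronAux

noncomputable def Fk (n k : ℕ) (s : ℝ) : ℂ :=
  ∑ j ∈ range (n + 2), ((-1 : ℂ) ^ j * ((n+1).choose j : ℂ)) *
    ((n + j).descFactorial k : ℂ) * (s : ℂ) ^ (n + j - k)

/-- k-th derivative of s^n (1-s)^{n+1}, via the expansion around 1. -/
noncomputable def Gk (n k : ℕ) (s : ℝ) : ℂ :=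
  ∑ i ∈ range (n + 1), ((-1 : ℂ) ^ (n+1) * (n.choose i : ℂ)) *
    ((n + 1 + i).descFactorial k : ℂ) * ((s : ℂ) - 1) ^ (n + 1 + i - k)

lemma hasDerivAt_term (c : ℂ) (m k : ℕ) (s : ℝ) :
    HasDerivAt (fun t : ℝ => c * ((m.descFactorial k : ℕ) : ℂ) * (t : ℂ) ^ (m - k))
      (c * ((m.descFactorial (k+1) : ℕ) : ℂ) * (s : ℂ) ^ (m - (k+1))) s := by
  have h := ((hasDerivAt_pow (m - k) ((s : ℝ) : ℂ)).comp_ofReal).const_mul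
      (c * ((m.descFactorial k : ℕ) : ℂ))
  refine h.congr_deriv ?_
  have h2 : m - (k+1) = m - k - 1 := by omega
  rw [h2, Nat.descFactorial_succ m k]
  push_cast
  ring

lemma hasDerivAt_term' (c : ℂ) (m k : ℕ) (s : ℝ) :
    HasDerivAt (fun t : ℝ => c * ((m.descFactorial k : ℕ) : ℂ) * ((t : ℂ) - 1) ^ (m - k))
      (c * ((m.descFactorial (k+1) : ℕ) : ℂ) * ((s : ℂ) - 1) ^ (m - (k+1))) s := by
  have h1 : HasDerivAt (fun w : ℂ => (w - 1) ^ (m - k))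
      (((m - k : ℕ) : ℂ) * ((s : ℂ) - 1) ^ (m - k - 1) * 1) ((s : ℝ) : ℂ) :=
    ((hasDerivAt_id _).sub_const 1).pow _
  have h := (h1.comp_ofReal).const_mul (c * ((m.descFactorial k : ℕ) : ℂ))
  refine h.congr_deriv ?_
  have h2 : m - (k+1) = m - k - 1 := by omega
  rw [h2, Nat.descFactorial_succ m k]
  push_cast
  ring

lemma hasDerivAt_Fk (n k : ℕ) (s : ℝ) : HasDerivAt (Fk n k) (Fk n (k+1) s) s := by
  unfold Fk
  exact HasDerivAt.fun_sum fun j _ => hasDerivAt_term _ (n + j) k s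

lemma hasDerivAt_Gk (n k : ℕ) (s : ℝ) : HasDerivAt (Gk n k) (Gk n (k+1) s) s := by
  unfold Gk
  exact HasDerivAt.fun_sum fun i _ => hasDerivAt_term' _ (n + 1 + i) k s

lemma Fk_zero (n : ℕ) (s : ℝ) : Fk n 0 s = (s : ℂ) ^ n * (1 - (s : ℂ)) ^ (n+1) := by
  have h : (1 - (s : ℂ)) ^ (n+1) = ((-(s:ℂ)) + 1) ^ (n+1) := by ring_nf
  rw [h, add_pow]
  rw [Finset.mul_sum]
  unfold Fk
  refine Finset.sum_congr rfl fun j hj => ?_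
  have hn : (-(s:ℂ))^j = (-1)^j * (s:ℂ)^j := by rw [neg_pow]
  simp only [Nat.descFactorial_zero, Nat.sub_zero, one_pow, Nat.cast_one, pow_add, hn]
  ring

lemma Gk_zero (n : ℕ) (s : ℝ) : Gk n 0 s = (s : ℂ) ^ n * (1 - (s : ℂ)) ^ (n+1) := by
  have h1 : (s : ℂ) ^ n = (((s:ℂ) - 1) + 1) ^ n := by ring_nf
  have h0 : (1 - (s : ℂ)) = (-1) * ((s:ℂ) - 1) := by ring
  rw [h1, h0, mul_pow, add_pow, Finset.sum_mul]
  unfold Gk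
  refine Finset.sum_congr rfl fun i hi => ?_
  simp only [Nat.descFactorial_zero, Nat.sub_zero, Nat.cast_one, one_pow, pow_add]
  ring

lemma Fk_eq_Gk (n k : ℕ) : Fk n k = Gk n k := by
  induction k with
  | zero => funext s; rw [Fk_zero, Gk_zero]
  | succ k ih =>
    funext s
    have hF := hasDerivAt_Fk n k s
    have hG := hasDerivAt_Gk n k s
    rw [ih] at hF
    exact hF.unique hG


noncomputable def AD (n : ℕ) (z : ℂ) (s : ℝ) : ℂ :=
  -Complex.exp (-(s:ℂ) * z) * ∑ k ∈ range (2*n + 2), Fk n k s / z ^ (k+1)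

lemma Fk_top (n : ℕ) (s : ℝ) : Fk n (2*n+2) s = 0 := by
  unfold Fk
  refine Finset.sum_eq_zero fun j hj => ?_
  rw [mem_range] at hj
  have : (n + j).descFactorial (2*n+2) = 0 :=
    Nat.descFactorial_eq_zero_iff_lt.mpr (by omega)
  rw [this]
  simp

lemma hasDerivAt_AD (n : ℕ) (z : ℂ) (hz : z ≠ 0) (s : ℝ) :
    HasDerivAt (AD n z)
      ((s : ℂ) ^ n * (1 - (s : ℂ)) ^ (n+1) * Complex.exp (-(s:ℂ) * z)) s := by
  have hexp : HasDerivAt (fun t : ℝ => -Complex.exp (-(t:ℂ) * z))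
      (-(Complex.exp (-(s:ℂ) * z) * -z)) s := by
    have h1 : HasDerivAt (fun w : ℂ => Complex.exp (-w * z))
        (Complex.exp (-(s:ℂ) * z) * -z) ((s:ℝ) : ℂ) := by
      have := ((hasDerivAt_id ((s:ℝ):ℂ)).neg.mul_const z).cexp
      simpa using this
    exact (h1.comp_ofReal).neg
  have hsum : HasDerivAt (fun t : ℝ => ∑ k ∈ range (2*n + 2), Fk n k t / z ^ (k+1))
      (∑ k ∈ range (2*n + 2), Fk n (k+1) s / z ^ (k+1)) s :=
    HasDerivAt.fun_sum fun k _ => (hasDerivAt_Fk n k s).div_const _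
  have h := hexp.mul hsum
  have hmul : ∀ k, z * (Fk n k s / z ^ (k+1)) = Fk n k s / z ^ k := by
    intro k
    rw [pow_succ]
    field_simp
  have hzS : z * (∑ k ∈ range (2*n + 2), Fk n k s / z ^ (k+1))
      = ∑ k ∈ range (2*n + 2), Fk n k s / z ^ k := by
    rw [Finset.mul_sum]
    exact Finset.sum_congr rfl fun k _ => hmul k
  have htel : ∑ k ∈ range (2*n + 2), (Fk n k s / z ^ k - Fk n (k+1) s / z ^ (k+1))
      = Fk n 0 s / z ^ 0 - Fk n (2*n+2) s / z ^ (2*n+2) :=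
    Finset.sum_range_sub' (fun k => Fk n k s / z ^ k) (2*n+2)
  have key : -(Complex.exp (-(s:ℂ) * z) * -z) * (∑ k ∈ range (2*n + 2), Fk n k s / z ^ (k+1))
        + (-Complex.exp (-(s:ℂ) * z)) * (∑ k ∈ range (2*n + 2), Fk n (k+1) s / z ^ (k+1))
      = (s : ℂ) ^ n * (1 - (s : ℂ)) ^ (n+1) * Complex.exp (-(s:ℂ) * z) := by
    calc -(Complex.exp (-(s:ℂ) * z) * -z) * (∑ k ∈ range (2*n + 2), Fk n k s / z ^ (k+1))
          + (-Complex.exp (-(s:ℂ) * z)) * (∑ k ∈ range (2*n + 2), Fk n (k+1) s / z ^ (k+1))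
        = Complex.exp (-(s:ℂ) * z) *
            (z * (∑ k ∈ range (2*n + 2), Fk n k s / z ^ (k+1))
              - ∑ k ∈ range (2*n + 2), Fk n (k+1) s / z ^ (k+1)) := by ring
      _ = Complex.exp (-(s:ℂ) * z) *
            (∑ k ∈ range (2*n + 2), (Fk n k s / z ^ k - Fk n (k+1) s / z ^ (k+1))) := by
          rw [hzS, Finset.sum_sub_distrib]
      _ = (s : ℂ) ^ n * (1 - (s : ℂ)) ^ (n+1) * Complex.exp (-(s:ℂ) * z) := by
          rw [htel, Fk_top, Fk_zero]
          simp
          ring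
  rw [← key]
  exact h

lemma integrand_continuous (n : ℕ) (z : ℂ) :
    Continuous fun s : ℝ => (s : ℂ) ^ n * (1 - (s : ℂ)) ^ (n+1) * Complex.exp (-(s:ℂ) * z) := by
  fun_prop

lemma integral_eq_AD (n : ℕ) (z : ℂ) (hz : z ≠ 0) :
    (∫ s in (0 : ℝ)..1, (s : ℂ) ^ n * (1 - (s : ℂ)) ^ (n + 1) * Complex.exp (-(s : ℂ) * z))
      = AD n z 1 - AD n z 0 :=
  intervalIntegral.integral_eq_sub_of_hasDerivAt
    (fun s _ => hasDerivAt_AD n z hz s)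
    ((integrand_continuous n z).intervalIntegrable _ _)

lemma AD_zero (n : ℕ) (z : ℂ) :
    AD n z 0 = -∑ j ∈ range (n + 2),
      ((-1 : ℂ) ^ j * ((n+1).choose j : ℂ)) * ((n + j).factorial : ℂ) / z ^ (n + j + 1) := by
  unfold AD
  rw [show ((0:ℝ):ℂ) = 0 from Complex.ofReal_zero]
  simp only [neg_zero, zero_mul, Complex.exp_zero, neg_mul, one_mul, neg_inj]
  unfold Fk
  rw [Finset.sum_congr rfl (fun k _ => Finset.sum_div (range (n+2))
    (fun j => ((-1 : ℂ) ^ j * ((n+1).choose j : ℂ)) * ((n + j).descFactorial k : ℂ)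
      * ((0:ℝ) : ℂ) ^ (n + j - k)) (z ^ (k+1))), Finset.sum_comm]
  refine Finset.sum_congr rfl fun j hj => ?_
  rw [mem_range] at hj
  rw [Finset.sum_eq_single_of_mem (n + j) (mem_range.mpr (by omega))]
  · rw [Nat.sub_self, pow_zero, Nat.descFactorial_self]
    ring
  · intro k hk hne
    rcases Nat.lt_or_ge k (n + j) with h | h
    · rw [show ((0:ℝ):ℂ) = 0 from Complex.ofReal_zero, zero_pow (by omega)]
      ring
    · have : (n + j).descFactorial k = 0 :=
        Nat.descFactorial_eq_zero_iff_lt.mpr (by omega)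
      rw [this]
      simp

lemma AD_one (n : ℕ) (z : ℂ) :
    AD n z 1 = -Complex.exp (-z) * ∑ i ∈ range (n + 1),
      ((-1 : ℂ) ^ (n+1) * (n.choose i : ℂ)) * ((n + 1 + i).factorial : ℂ) / z ^ (n + 1 + i + 1) := by
  unfold AD
  simp only [Fk_eq_Gk]
  unfold Gk
  simp only [Complex.ofReal_one, Finset.sum_div, neg_mul, neg_inj,
    show -(1:ℂ)*z = -z by ring]
  congr 1
  refine Finset.sum_comm.trans ?_
  refine Finset.sum_congr rfl fun i hi => ?_
  rw [mem_range] at hi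
  rw [Finset.sum_eq_single_of_mem (n + 1 + i) (mem_range.mpr (by omega))]
  · rw [Nat.sub_self, pow_zero, Nat.descFactorial_self]
    ring
  · intro k hk hne
    rcases Nat.lt_or_ge k (n + 1 + i) with h | h
    · rw [show (1:ℂ) - 1 = 0 by norm_num, zero_pow (by omega)]
      ring
    · have : (n + 1 + i).descFactorial k = 0 :=
        Nat.descFactorial_eq_zero_iff_lt.mpr (by omega)
      rw [this]
      simp


lemma fact_ne (m : ℕ) : ((m.factorial : ℕ) : ℂ) ≠ 0 :=
  Nat.cast_ne_zero.mpr (Nat.factorial_ne_zero m)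

/-- T0 -/
noncomputable def T0 (n : ℕ) (z : ℂ) : ℂ :=
  ∑ j ∈ range (n + 2), (-1 : ℂ) ^ j * ((n+1).choose j : ℂ) * ((n + j).factorial : ℂ) * z ^ (n + 1 - j)

/-- U -/
noncomputable def U (n : ℕ) (z : ℂ) : ℂ :=
  ∑ i ∈ range (n + 1), (n.choose i : ℂ) * ((n + 1 + i).factorial : ℂ) * z ^ (n - i)

lemma lemP (n : ℕ) (z : ℂ) : (((2*n+1).factorial : ℕ) : ℂ) * padeP n z = U n z := by
  unfold padeP U
  rw [Finset.mul_sum]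
  conv_rhs => rw [← Finset.sum_range_reflect]
  refine Finset.sum_congr rfl fun j hj => ?_
  rw [mem_range] at hj
  have hjn : j ≤ n := by omega
  have e1 : n + 1 + (n + 1 - 1 - j) = 2*n + 1 - j := by omega
  have e2 : n - (n + 1 - 1 - j) = j := by omega
  have e3 : n + 1 - 1 - j = n - j := by omega
  rw [e1, e2, e3, Nat.choose_symm hjn]
  have hch : (n.choose j : ℂ) * (j.factorial : ℕ) * ((n-j).factorial : ℕ) = ((n.factorial : ℕ) : ℂ) := by
    exact_mod_cast congrArg (Nat.cast : ℕ → ℂ) (Nat.choose_mul_factorial_mul_factorial hjn)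
  push_cast
  rw [← hch]
  have h1 := fact_ne (2*n+1)
  have h2 := fact_ne j
  have h3 := fact_ne (n - j)
  field_simp

lemma lemQ (n : ℕ) (z : ℂ) :
    (((2*n+1).factorial : ℕ) : ℂ) * padeQ n z = (-1 : ℂ) ^ (n+1) * T0 n z := by
  unfold padeQ T0
  rw [Finset.mul_sum, Finset.mul_sum]
  conv_rhs => rw [← Finset.sum_range_reflect]
  refine Finset.sum_congr rfl fun k hk => ?_
  rw [mem_range] at hk
  have hkn : k ≤ n + 1 := by omega
  have e1 : n + (n + 2 - 1 - k) = 2*n + 1 - k := by omega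
  have e2 : n + 1 - (n + 2 - 1 - k) = k := by omega
  have e3 : n + 2 - 1 - k = n + 1 - k := by omega
  rw [e1, e2, e3, Nat.choose_symm hkn]
  have hsign : (-1 : ℂ) ^ (n+1) * ((-1 : ℂ) ^ (n + 1 - k)) = (-1 : ℂ) ^ k := by
    have e4 : (n+1) + (n+1-k) = 2*(n+1-k) + k := by omega
    rw [← pow_add, e4, pow_add, pow_mul]
    norm_num
  have hch : ((n+1).choose k : ℂ) * (k.factorial : ℕ) * ((n+1-k).factorial : ℕ)
      = (((n+1).factorial : ℕ) : ℂ) := by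
    exact_mod_cast congrArg (Nat.cast : ℕ → ℂ) (Nat.choose_mul_factorial_mul_factorial hkn)
  rw [neg_pow z k]
  have hr : (-1:ℂ)^(n+1) * ((-1:ℂ)^(n+1-k) * (((n+1).choose k : ℕ) : ℂ)
        * (((2*n+1-k).factorial : ℕ) : ℂ) * z^k)
      = (-1:ℂ)^k * ((((n+1).choose k : ℕ) : ℂ) * (((2*n+1-k).factorial : ℕ) : ℂ)) * z^k := by
    rw [← hsign]; ring
  rw [hr]
  push_cast
  rw [← hch]
  have h1 := fact_ne (2*n+1)
  have h2 := fact_ne k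
  have h3 := fact_ne (n + 1 - k)
  field_simp

lemma lemS0 (n : ℕ) (z : ℂ) (hz : z ≠ 0) :
    z ^ (2*n+2) * (∑ j ∈ range (n + 2),
      ((-1 : ℂ) ^ j * ((n+1).choose j : ℂ)) * ((n + j).factorial : ℂ) / z ^ (n + j + 1))
      = T0 n z := by
  unfold T0
  rw [Finset.mul_sum]
  refine Finset.sum_congr rfl fun j hj => ?_
  rw [mem_range] at hj
  have e1 : 2*n+2 = (n + j + 1) + (n + 1 - j) := by omega
  rw [e1, pow_add]
  have hzp : (z : ℂ) ^ (n + j + 1) ≠ 0 := pow_ne_zero _ hz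
  field_simp

lemma lemS1 (n : ℕ) (z : ℂ) (hz : z ≠ 0) :
    z ^ (2*n+2) * (∑ i ∈ range (n + 1),
      ((-1 : ℂ) ^ (n+1) * (n.choose i : ℂ)) * ((n + 1 + i).factorial : ℂ) / z ^ (n + 1 + i + 1))
      = (-1 : ℂ) ^ (n+1) * U n z := by
  unfold U
  rw [Finset.mul_sum, Finset.mul_sum]
  refine Finset.sum_congr rfl fun i hi => ?_
  rw [mem_range] at hi
  have e1 : 2*n+2 = (n + 1 + i + 1) + (n - i) := by omega
  rw [e1, pow_add]
  have hzp : (z : ℂ) ^ (n + 1 + i + 1) ≠ 0 := pow_ne_zero _ hz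
  field_simp


end PerronAux

open PerronAux in
/-- Perron's representation of the Padé error term. -/
theorem perron_representation (n : ℕ) (z : ℂ) (hQ : padeQ n z ≠ 0) :
    padeP n z / padeQ n z - Complex.exp z
      = (-1 : ℂ) ^ (n + 2) / padeQ n z * (1 / ((Nat.factorial (2 * n + 1) : ℕ) : ℂ))
          * z ^ (2 * n + 2) * Complex.exp z
          * ∫ s in (0 : ℝ)..1, (s : ℂ) ^ n * (1 - (s : ℂ)) ^ (n + 1)
              * Complex.exp (-(s : ℂ) * z) := by
  rcases eq_or_ne z 0 with hz | hz
  · subst hz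
    have hP0 : padeP n 0 = 1 := by
      unfold padeP
      rw [Finset.sum_eq_single 0]
      · simp only [pow_zero, mul_one, Nat.sub_zero, Nat.factorial_zero, mul_one]
        exact div_self (Nat.cast_ne_zero.mpr
          (Nat.mul_ne_zero (Nat.factorial_ne_zero _) (Nat.factorial_ne_zero _)))
      · intro j _ hj
        rw [zero_pow hj, mul_zero]
      · intro h
        exact absurd (mem_range.mpr (by omega)) h
    have hQ0 : padeQ n 0 = 1 := by
      unfold padeQ
      rw [Finset.sum_eq_single 0]
      · simp only [pow_zero, mul_one, Nat.sub_zero, Nat.factorial_zero, mul_one]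
        exact div_self (Nat.cast_ne_zero.mpr
          (Nat.mul_ne_zero (Nat.factorial_ne_zero _) (Nat.factorial_ne_zero _)))
      · intro j _ hj
        rw [neg_zero, zero_pow hj, mul_zero]
      · intro h
        exact absurd (mem_range.mpr (by omega)) h
    rw [hP0, hQ0, zero_pow (show 2*n+2 ≠ 0 by omega)]
    simp
  · have hE : Complex.exp z ≠ 0 := Complex.exp_ne_zero z
    have hc : (((2*n+1).factorial : ℕ) : ℂ) ≠ 0 := fact_ne (2*n+1)
    have hzp : z ^ (2*n+2) ≠ 0 := pow_ne_zero _ hz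
    rw [integral_eq_AD n z hz, AD_one, AD_zero, Complex.exp_neg]
    set S0 := ∑ j ∈ range (n + 2),
      ((-1 : ℂ) ^ j * ((n+1).choose j : ℂ)) * ((n + j).factorial : ℂ) / z ^ (n + j + 1) with hS0def
    set S1 := ∑ i ∈ range (n + 1),
      ((-1 : ℂ) ^ (n+1) * (n.choose i : ℂ)) * ((n + 1 + i).factorial : ℂ) / z ^ (n + 1 + i + 1)
      with hS1def
    have h0 := lemS0 n z hz
    have h1 := lemS1 n z hz
    have hp := lemP n z
    have hq := lemQ n z
    rw [← hS0def] at h0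
    rw [← hS1def] at h1
    rcases Nat.even_or_odd n with hpar | hpar
    · have e1 : (-1 : ℂ) ^ (n+1) = -1 := Odd.neg_one_pow (by simp [parity_simps, hpar])
      have e2 : (-1 : ℂ) ^ (n+2) = 1 := Even.neg_one_pow (by simp [parity_simps, hpar])
      rw [e1] at h1 hq
      have hS0' : S0 = -((((2*n+1).factorial : ℕ) : ℂ) * padeQ n z) / z ^ (2*n+2) :=
        (eq_div_iff hzp).mpr (by linear_combination h0 + hq)
      have hS1' : S1 = -((((2*n+1).factorial : ℕ) : ℂ) * padeP n z) / z ^ (2*n+2) :=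
        (eq_div_iff hzp).mpr (by linear_combination h1 + hp)
      rw [e2, hS0', hS1']
      field_simp
    · have e1 : (-1 : ℂ) ^ (n+1) = 1 := Even.neg_one_pow (by simp [parity_simps, hpar])
      have e2 : (-1 : ℂ) ^ (n+2) = -1 := Odd.neg_one_pow (by simp [parity_simps, hpar])
      rw [e1] at h1 hq
      have hS0' : S0 = ((((2*n+1).factorial : ℕ) : ℂ) * padeQ n z) / z ^ (2*n+2) :=
        (eq_div_iff hzp).mpr (by linear_combination h0 - hq)
      have hS1' : S1 = ((((2*n+1).factorial : ℕ) : ℂ) * padeP n z) / z ^ (2*n+2) :=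
        (eq_div_iff hzp).mpr (by linear_combination h1 - hp)
      rw [e2, hS0', hS1']
      field_simp
      ring
end

section
/- Let n ∈ ℕ and α ∈ (1/2, n + 1/2]. Suppose g : ℝ → ℂ satisfies |g(t)| ≤ min{ (1/2)·(n!/(2n+1)!)^2·|t|^{2n+2−α}, 2·|t|^{−α} } for all t ≠ 0. Then the L²(ℝ)-norm of g satisfies ‖g‖_{L²(ℝ)} ≤ (4/√(2α−1))·(n+1)^{−α+1/2}. -/
open MeasureTheory Set
open scoped ENNReal NNReal

theorem my_lintegral_comp_abs (f : ℝ → ENNReal) :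
    ∫⁻ x : ℝ, f |x| = 2 * ∫⁻ x in Set.Ioi (0:ℝ), f x := by
  have hemb : MeasurableEmbedding (fun x : ℝ => -x) := (Homeomorph.neg ℝ).measurableEmbedding
  have h1 : ∫⁻ x in Iic (0:ℝ), f |x| = ∫⁻ x in Ioi (0:ℝ), f x := by
    have hmap : Measure.map (fun x : ℝ => -x) (volume.restrict (Ici (0:ℝ)))
        = volume.restrict (Iic (0:ℝ)) := by
      rw [show Ici (0:ℝ) = (fun x : ℝ => -x) ⁻¹' (Iic 0) by simp]
      rw [← hemb.restrict_map volume (Iic 0), Measure.map_neg_eq_self]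
    rw [← hmap, hemb.lintegral_map]
    rw [Measure.restrict_congr_set (Ioi_ae_eq_Ici (a := (0:ℝ))).symm]
    refine lintegral_congr_ae ?_
    filter_upwards [self_mem_ae_restrict measurableSet_Ioi] with x hx
    rw [abs_neg, abs_of_pos hx]
  have h2 : ∫⁻ x in Ioi (0:ℝ), f |x| = ∫⁻ x in Ioi (0:ℝ), f x := by
    refine lintegral_congr_ae ?_
    filter_upwards [self_mem_ae_restrict measurableSet_Ioi] with x hx
    rw [abs_of_pos hx]
  calc ∫⁻ x : ℝ, f |x| = (∫⁻ x in Iic (0:ℝ), f |x|) + ∫⁻ x in Ioi (0:ℝ), f |x| := by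
        rw [← lintegral_add_compl (fun x => f |x|) measurableSet_Iic, compl_Iic]
      _ = 2 * ∫⁻ x in Set.Ioi (0:ℝ), f x := by rw [h1, h2, two_mul]

theorem my_fact_bound (n : ℕ) :
    ((Nat.factorial n : ℝ) / (Nat.factorial (2 * n + 1) : ℝ)) * ((n : ℝ) + 1) ^ (n + 1) ≤ 1 := by
  have h : (Nat.factorial n) * (n + 1) ^ (n + 1) ≤ Nat.factorial (2 * n + 1) := by
    have := Nat.factorial_mul_pow_le_factorial (m := n) (n := n + 1)
    have e : n + (n + 1) = 2 * n + 1 := by omega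
    rwa [e] at this
  have hpos : (0:ℝ) < (Nat.factorial (2 * n + 1) : ℝ) := by
    exact_mod_cast Nat.factorial_pos _
  rw [div_mul_eq_mul_div, div_le_one hpos]
  exact_mod_cast h

theorem pade_modified_error_L2_bound (n : ℕ) (α : ℝ) (hα1 : 1 / 2 < α)
    (hα2 : α ≤ (n : ℝ) + 1 / 2) (g : ℝ → ℂ)
    (hg : ∀ t : ℝ, t ≠ 0 → ‖g t‖ ≤ min
      (1 / 2 * ((Nat.factorial n : ℝ) / (Nat.factorial (2 * n + 1) : ℝ)) ^ 2
        * |t| ^ (2 * (n : ℝ) + 2 - α))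
      (2 * |t| ^ (-α))) :
    eLpNorm g 2 volume
      ≤ ENNReal.ofReal (4 / Real.sqrt (2 * α - 1) * ((n : ℝ) + 1) ^ (-α + 1 / 2)) := by
  set r : ℝ := (Nat.factorial n : ℝ) / (Nat.factorial (2 * n + 1) : ℝ) with hr
  have hr0 : 0 ≤ r := div_nonneg (Nat.cast_nonneg _) (Nat.cast_nonneg _)
  set K : ℝ := 1 / 2 * r ^ 2 with hK
  have hK0 : 0 ≤ K := by positivity
  set T : ℝ := (n : ℝ) + 1 with hTdef
  have hT : (0:ℝ) < T := by positivity
  set e : ℝ := 2 * (n : ℝ) + 2 - α with he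
  set β : ℝ := e * 2 with hβ
  have hα0 : 0 < 2 * α - 1 := by linarith
  have hβpos : (0:ℝ) < β := by
    have : α ≤ (n:ℝ) + 1/2 := hα2
    simp only [hβ, he]; nlinarith [Nat.cast_nonneg (α := ℝ) n]
  -- the majorant
  set F : ℝ → ENNReal := fun s =>
    ENNReal.ofReal (if s ≤ T then K ^ 2 * s ^ β else 4 * s ^ (-(2 * α))) with hF
  -- pointwise bound
  have hptwise : ∀ t : ℝ, t ≠ 0 → ((‖g t‖₊ : ℝ≥0∞)) ^ (2:ℝ) ≤ F |t| := by
    intro t ht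
    have hgt := hg t ht
    have habs : (0:ℝ) < |t| := abs_pos.mpr ht
    have hsq : (‖g t‖₊ : ℝ≥0∞) ^ (2:ℝ) = ENNReal.ofReal (‖g t‖ ^ 2) := by
      rw [← enorm_eq_nnnorm, ← ofReal_norm, ← Real.rpow_two,
        ENNReal.ofReal_rpow_of_nonneg (norm_nonneg (g t)) (by norm_num : (0:ℝ) ≤ 2)]
    rw [hsq, hF]
    apply ENNReal.ofReal_le_ofReal
    by_cases hcase : |t| ≤ T
    · rw [if_pos hcase]
      have h1 : ‖g t‖ ≤ K * |t| ^ e := le_trans hgt (min_le_left _ _)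
      have h2 : ‖g t‖ ^ 2 ≤ (K * |t| ^ e) ^ 2 :=
        pow_le_pow_left₀ (norm_nonneg _) h1 2
      calc ‖g t‖ ^ 2 ≤ (K * |t| ^ e) ^ 2 := h2
        _ = K ^ 2 * (|t| ^ e) ^ 2 := by ring
        _ = K ^ 2 * |t| ^ β := by
            rw [hβ, ← Real.rpow_natCast (|t| ^ e) 2, ← Real.rpow_mul (abs_nonneg t)]
            norm_num
    · rw [if_neg hcase]
      have h1 : ‖g t‖ ≤ 2 * |t| ^ (-α) := le_trans hgt (min_le_right _ _)
      have h2 : ‖g t‖ ^ 2 ≤ (2 * |t| ^ (-α)) ^ 2 :=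
        pow_le_pow_left₀ (norm_nonneg _) h1 2
      calc ‖g t‖ ^ 2 ≤ (2 * |t| ^ (-α)) ^ 2 := h2
        _ = 4 * (|t| ^ (-α)) ^ 2 := by ring
        _ = 4 * |t| ^ (-(2*α)) := by
            rw [← Real.rpow_natCast (|t| ^ (-α)) 2, ← Real.rpow_mul (abs_nonneg t)]
            norm_num; ring_nf
  -- the two pieces
  have hInt1 : IntegrableOn (fun s : ℝ => K ^ 2 * s ^ β) (Ioc 0 T) := by
    have : IntervalIntegrable (fun s : ℝ => s ^ β) volume 0 T :=
      intervalIntegral.intervalIntegrable_rpow (Or.inl hβpos.le)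
    exact (this.const_mul (K ^ 2)).1
  have hval1 : ∫ s in Ioc (0:ℝ) T, K ^ 2 * s ^ β = K ^ 2 * (T ^ (β + 1) / (β + 1)) := by
    rw [← intervalIntegral.integral_of_le hT.le, intervalIntegral.integral_const_mul,
      integral_rpow (Or.inl (by linarith))]
    rw [Real.zero_rpow (by positivity)]
    ring
  have hInt2 : IntegrableOn (fun s : ℝ => 4 * s ^ (-(2 * α))) (Ioi T) := by
    exact (integrableOn_Ioi_rpow_of_lt (by linarith) hT).const_mul 4
  have hval2 : ∫ s in Ioi T, 4 * s ^ (-(2 * α)) = 4 * (T ^ (1 - 2 * α) / (2 * α - 1)) := by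
    rw [MeasureTheory.integral_const_mul, integral_Ioi_rpow_of_lt (by linarith) hT,
      show -(2*α) + 1 = 1 - 2*α by ring]
    have h1 : (1:ℝ) - 2 * α ≠ 0 := by intro h; linarith
    field_simp
    ring
  -- lintegral of F over Ioi 0
  have hpiece1 : ∫⁻ s in Ioc (0:ℝ) T, F s
      = ENNReal.ofReal (K ^ 2 * (T ^ (β + 1) / (β + 1))) := by
    rw [← hval1]
    rw [MeasureTheory.ofReal_integral_eq_lintegral_ofReal hInt1 ?_]
    · refine setLIntegral_congr_fun measurableSet_Ioc ?_
      intro s hs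
      rw [hF]; simp only [if_pos hs.2]
    · filter_upwards [self_mem_ae_restrict measurableSet_Ioc] with s hs
      have : (0:ℝ) < s := hs.1
      positivity
  have hpiece2 : ∫⁻ s in Ioi T, F s
      = ENNReal.ofReal (4 * (T ^ (1 - 2 * α) / (2 * α - 1))) := by
    rw [← hval2]
    rw [MeasureTheory.ofReal_integral_eq_lintegral_ofReal hInt2 ?_]
    · refine setLIntegral_congr_fun measurableSet_Ioi ?_
      intro s hs
      rw [hF]; simp only [if_neg (not_le.mpr (show T < s from hs))]
    · filter_upwards [self_mem_ae_restrict measurableSet_Ioi] with s hs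
      have : (0:ℝ) < s := lt_trans hT hs
      positivity
  -- key numeric bounds
  have hKT : K ^ 2 * T ^ ((4 * n + 4 : ℕ) : ℝ) ≤ 4 := by
    have hb := my_fact_bound n
    have hrT : r * T ^ (n + 1) ≤ 1 := hb
    have hrT0 : 0 ≤ r * T ^ (n + 1) := by positivity
    have h4 : (r * T ^ (n + 1)) ^ 4 ≤ 1 := pow_le_one₀ hrT0 hrT
    rw [Real.rpow_natCast]
    have : K ^ 2 * T ^ (4 * n + 4) = 1/4 * (r * T ^ (n + 1)) ^ 4 := by
      rw [hK, show 4 * n + 4 = (n + 1) * 4 by ring, pow_mul]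
      ring
    rw [this]; linarith
  have hsum : K ^ 2 * (T ^ (β + 1) / (β + 1)) ≤ 4 * (T ^ (1 - 2 * α) / (2 * α - 1)) := by
    have hβ1 : β + 1 = ((4 * n + 4 : ℕ) : ℝ) + (1 - 2 * α) := by
      push_cast [hβ, he]; ring
    have hsplit : T ^ (β + 1) = T ^ ((4 * n + 4 : ℕ) : ℝ) * T ^ (1 - 2 * α) := by
      rw [hβ1, Real.rpow_add hT]
    have hden : 2 * α - 1 ≤ β + 1 := by
      rw [hβ1]; push_cast
      nlinarith [Nat.cast_nonneg (α := ℝ) n]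
    have hTrp : (0:ℝ) ≤ T ^ (1 - 2 * α) := (Real.rpow_pos_of_pos hT _).le
    calc K ^ 2 * (T ^ (β + 1) / (β + 1))
        = (K ^ 2 * T ^ ((4 * n + 4 : ℕ) : ℝ)) * (T ^ (1 - 2 * α) / (β + 1)) := by
          rw [hsplit]; ring
      _ ≤ 4 * (T ^ (1 - 2 * α) / (2 * α - 1)) := by
          apply mul_le_mul hKT
          · exact div_le_div_of_nonneg_left hTrp hα0 hden
          · positivity
          · norm_num
  -- final constant
  set C : ℝ := 16 * (T ^ (1 - 2 * α) / (2 * α - 1)) with hC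
  have hC0 : 0 ≤ C := by
    have := (Real.rpow_pos_of_pos hT (1 - 2*α)).le
    rw [hC]; positivity
  have hlint : ∫⁻ t : ℝ, (‖g t‖₊ : ℝ≥0∞) ^ (2:ℝ) ≤ ENNReal.ofReal C := by
    have hae : ∀ᵐ t : ℝ, (‖g t‖₊ : ℝ≥0∞) ^ (2:ℝ) ≤ F |t| := by
      have h0 : ∀ᵐ t : ℝ, t ≠ 0 := by
        have : volume ({(0:ℝ)} : Set ℝ) = 0 := measure_singleton 0
        exact measure_eq_zero_iff_ae_notMem.mp this
      filter_upwards [h0] with t ht using hptwise t ht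
    calc ∫⁻ t : ℝ, (‖g t‖₊ : ℝ≥0∞) ^ (2:ℝ) ≤ ∫⁻ t : ℝ, F |t| := lintegral_mono_ae hae
      _ = 2 * ∫⁻ s in Ioi (0:ℝ), F s := my_lintegral_comp_abs F
      _ = 2 * ((∫⁻ s in Ioc (0:ℝ) T, F s) + ∫⁻ s in Ioi T, F s) := by
          rw [← lintegral_union measurableSet_Ioi
            (Set.Ioc_disjoint_Ioi le_rfl), Set.Ioc_union_Ioi_eq_Ioi hT.le]
      _ ≤ ENNReal.ofReal C := by
          rw [hpiece1, hpiece2, ← ENNReal.ofReal_add (by positivity) (by positivity),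
            ← ENNReal.ofReal_ofNat, ← ENNReal.ofReal_mul (by norm_num)]
          apply ENNReal.ofReal_le_ofReal
          rw [hC]
          calc 2 * (K ^ 2 * (T ^ (β + 1) / (β + 1)) + 4 * (T ^ (1 - 2 * α) / (2 * α - 1)))
              ≤ 2 * (4 * (T ^ (1 - 2 * α) / (2 * α - 1))
                + 4 * (T ^ (1 - 2 * α) / (2 * α - 1))) := by
                have h0 : (0:ℝ) ≤ 2 := by norm_num
                nlinarith [hsum]
            _ = 16 * (T ^ (1 - 2 * α) / (2 * α - 1)) := by ring
  -- conclude
  rw [eLpNorm_eq_lintegral_rpow_enorm_toReal (by norm_num) (by norm_num)]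
  have htoReal : (2 : ENNReal).toReal = (2:ℝ) := by norm_num
  rw [htoReal]
  calc (∫⁻ t : ℝ, (‖g t‖₊ : ℝ≥0∞) ^ (2:ℝ)) ^ (1/(2:ℝ))
      ≤ (ENNReal.ofReal C) ^ (1/(2:ℝ)) := ENNReal.rpow_le_rpow hlint (by norm_num)
    _ = ENNReal.ofReal (C ^ (1/(2:ℝ))) :=
        ENNReal.ofReal_rpow_of_nonneg hC0 (by norm_num : (0:ℝ) ≤ 1/2)
    _ ≤ ENNReal.ofReal (4 / Real.sqrt (2 * α - 1) * T ^ (-α + 1 / 2)) := by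
        apply ENNReal.ofReal_le_ofReal
        set D : ℝ := 4 / Real.sqrt (2 * α - 1) * T ^ (-α + 1 / 2) with hD
        have hD0 : 0 ≤ D := by
          have := (Real.rpow_pos_of_pos hT (-α + 1/2)).le
          have := Real.sqrt_nonneg (2*α - 1)
          positivity
        have hDsq : D ^ 2 = C := by
          rw [hD, hC, mul_pow, div_pow, Real.sq_sqrt hα0.le,
            ← Real.rpow_natCast (T ^ (-α + 1/2)) 2, ← Real.rpow_mul hT.le]
          norm_num
          rw [show (-α + 1/2) * 2 = 1 - 2*α by ring]
          ring
        rw [← Real.sqrt_eq_rpow, ← hDsq, Real.sqrt_sq hD0]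
end

section
/- (Carlson's inequality) Let g ∈ L²(ℝ) be such that the function t ↦ t·g(t) is also in L²(ℝ). Then g ∈ L¹(ℝ) and ‖g‖_{L¹(ℝ)} ≤ √(2π) · ‖g‖_{L²(ℝ)}^{1/2} · ‖t·g(t)‖_{L²(ℝ)}^{1/2}. -/
open MeasureTheory Real
open scoped ENNReal

lemma carlson_aux_fun {r : ℝ} (hr : 0 < r) :
    (fun t : ℝ => (r + t ^ 2 / r)⁻¹) = fun t : ℝ => r⁻¹ * (1 + (r⁻¹ * t) ^ 2)⁻¹ := by
  funext t
  rw [← mul_inv]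
  congr 1
  field_simp

lemma carlson_aux_integrable {r : ℝ} (hr : 0 < r) :
    Integrable (fun t : ℝ => (r + t ^ 2 / r)⁻¹) volume := by
  rw [carlson_aux_fun hr]
  exact ((integrable_inv_one_add_sq).comp_mul_left' (inv_ne_zero hr.ne')).const_mul _

lemma carlson_aux_integral {r : ℝ} (hr : 0 < r) :
    ∫ t : ℝ, (r + t ^ 2 / r)⁻¹ = Real.pi := by
  rw [carlson_aux_fun hr, integral_const_mul, MeasureTheory.Measure.integral_comp_mul_left
      (fun u : ℝ => (1 + u ^ 2)⁻¹) r⁻¹, integral_univ_inv_one_add_sq]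
  rw [inv_inv, abs_of_pos hr, smul_eq_mul]
  field_simp

lemma carlson_zero_case (g : ℝ → ℂ) (h0 : g =ᵐ[volume] 0)
    {C : ℝ} (hC : 0 ≤ C) :
    Integrable g volume ∧ ∫ t : ℝ, ‖g t‖ ≤ C := by
  constructor
  · exact (integrable_congr h0).mpr (integrable_zero _ _ _)
  · have h1 : (fun t : ℝ => ‖g t‖) =ᵐ[volume] 0 := by
      filter_upwards [h0] with t ht
      simp [ht]
    rw [integral_eq_zero_of_ae h1]
    exact hC

/-- Carlson's inequality. -/
theorem carlson_inequality (g : ℝ → ℂ) (hg : MemLp g 2 volume)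
    (htg : MemLp (fun t : ℝ => t • g t) 2 volume) :
    Integrable g volume ∧
      ∫ t : ℝ, ‖g t‖
        ≤ Real.sqrt (2 * Real.pi) * ((eLpNorm g 2 volume).toReal) ^ ((1 : ℝ) / 2)
            * ((eLpNorm (fun t : ℝ => t • g t) 2 volume).toReal) ^ ((1 : ℝ) / 2) := by
  set N1 : ℝ := (eLpNorm g 2 volume).toReal with hN1def
  set N2 : ℝ := (eLpNorm (fun t : ℝ => t • g t) 2 volume).toReal with hN2def
  have hN1nonneg : 0 ≤ N1 := ENNReal.toReal_nonneg
  have hN2nonneg : 0 ≤ N2 := ENNReal.toReal_nonneg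
  have hRHSnonneg : 0 ≤ Real.sqrt (2 * Real.pi) * N1 ^ ((1:ℝ)/2) * N2 ^ ((1:ℝ)/2) := by
    positivity
  -- degenerate cases
  by_cases hN1 : N1 = 0
  · have h0 : g =ᵐ[volume] 0 := by
      have : eLpNorm g 2 volume = 0 := by
        rcases ENNReal.toReal_eq_zero_iff _ |>.mp hN1 with h | h
        · exact h
        · exact absurd h hg.2.ne
      exact (eLpNorm_eq_zero_iff hg.1 (by norm_num)).mp this
    exact carlson_zero_case g h0 hRHSnonneg
  by_cases hN2 : N2 = 0
  · have h0tg : (fun t : ℝ => t • g t) =ᵐ[volume] 0 := by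
      have : eLpNorm (fun t : ℝ => t • g t) 2 volume = 0 := by
        rcases ENNReal.toReal_eq_zero_iff _ |>.mp hN2 with h | h
        · exact h
        · exact absurd h htg.2.ne
      exact (eLpNorm_eq_zero_iff htg.1 (by norm_num)).mp this
    have h0 : g =ᵐ[volume] 0 := by
      have hne : ∀ᵐ t : ℝ, t ≠ 0 := by
        refine ae_iff.mpr ?_
        simp [Set.setOf_eq_eq_singleton]
      filter_upwards [h0tg, hne] with t ht htne
      have := ht
      simp only [Pi.zero_apply, smul_eq_zero] at this ⊢
      tauto
    exact carlson_zero_case g h0 hRHSnonneg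
  -- main case
  have hN1pos : 0 < N1 := lt_of_le_of_ne hN1nonneg (Ne.symm hN1)
  have hN2pos : 0 < N2 := lt_of_le_of_ne hN2nonneg (Ne.symm hN2)
  set r : ℝ := N2 / N1 with hrdef
  have hr : 0 < r := div_pos hN2pos hN1pos
  set w : ℝ → ℝ := fun t => r + t ^ 2 / r with hwdef
  have hwpos : ∀ t, 0 < w t := fun t => by positivity
  set F : ℝ → ℝ := fun t => Real.sqrt (w t) * ‖g t‖ with hFdef
  set G : ℝ → ℝ := fun t => (Real.sqrt (w t))⁻¹ with hGdef
  have hwc : Continuous w := by continuity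
  have hGc : Continuous G := by
    apply Continuous.inv₀ (continuous_sqrt.comp hwc)
    intro t
    exact (Real.sqrt_pos.mpr (hwpos t)).ne'
  have hFmeas : AEStronglyMeasurable F volume :=
    ((continuous_sqrt.comp hwc).aestronglyMeasurable).mul hg.1.norm
  -- integrals of squares
  have hsqg : Integrable (fun t : ℝ => ‖g t‖ ^ 2) volume :=
    (memLp_two_iff_integrable_sq hg.1.norm).mp hg.norm
  have hsqtg : Integrable (fun t : ℝ => ‖t • g t‖ ^ 2) volume :=
    (memLp_two_iff_integrable_sq htg.1.norm).mp htg.norm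
  have hFsq_eq : ∀ t : ℝ, F t ^ 2 = r * ‖g t‖ ^ 2 + r⁻¹ * ‖t • g t‖ ^ 2 := by
    intro t
    have h1 : Real.sqrt (w t) ^ 2 = w t := Real.sq_sqrt (hwpos t).le
    have h2 : ‖t • g t‖ ^ 2 = t ^ 2 * ‖g t‖ ^ 2 := by
      rw [norm_smul, mul_pow, Real.norm_eq_abs, sq_abs]
    simp only [hFdef, mul_pow, h1, h2, hwdef]
    rw [Real.sq_sqrt (by positivity)]
    field_simp
  have hFsq_int : Integrable (fun t : ℝ => F t ^ 2) volume := by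
    refine Integrable.congr ((hsqg.const_mul r).add (hsqtg.const_mul r⁻¹)) ?_
    filter_upwards with t
    exact (hFsq_eq t).symm
  have hGsq_eq : ∀ t : ℝ, G t ^ 2 = (w t)⁻¹ := by
    intro t
    simp only [hGdef]
    rw [inv_pow, Real.sq_sqrt (hwpos t).le]
  have hGsq_int : Integrable (fun t : ℝ => G t ^ 2) volume := by
    refine Integrable.congr (carlson_aux_integrable hr) ?_
    filter_upwards with t
    exact (hGsq_eq t).symm
  have hFmem : MemLp F 2 volume := (memLp_two_iff_integrable_sq hFmeas).mpr hFsq_int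
  have hGmem : MemLp G 2 volume := (memLp_two_iff_integrable_sq hGc.aestronglyMeasurable).mpr hGsq_int
  -- F * G = ‖g‖
  have hFG : ∀ t : ℝ, F t * G t = ‖g t‖ := by
    intro t
    have hs : Real.sqrt (w t) ≠ 0 := (Real.sqrt_pos.mpr (hwpos t)).ne'
    simp only [hFdef, hGdef]
    rw [mul_comm (Real.sqrt (w t)) ‖g t‖, mul_assoc, mul_inv_cancel₀ hs, mul_one]
  -- integrability of g
  have hint : Integrable g volume := by
    have h1 : MemLp (F • G) 1 volume := by
      exact hGmem.smul hFmem
    have h2 : Integrable (fun t : ℝ => ‖g t‖) volume := by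
      refine (memLp_one_iff_integrable.mp h1).congr ?_
      filter_upwards with t
      exact hFG t
    exact (integrable_norm_iff hg.1).mp h2
  refine ⟨hint, ?_⟩
  -- Cauchy–Schwarz
  have hconj : Real.HolderConjugate 2 2 := ⟨by norm_num, by norm_num, by norm_num⟩
  have hof : (ENNReal.ofReal (2:ℝ)) = 2 := by norm_num
  have hCS := integral_mul_le_Lp_mul_Lq_of_nonneg hconj
      (f := F) (g := G) (μ := volume)
      (Filter.Eventually.of_forall fun t => by positivity)
      (Filter.Eventually.of_forall fun t => by positivity)
      (hof ▸ hFmem) (hof ▸ hGmem)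
  have hLHS : ∫ t : ℝ, ‖g t‖ = ∫ t : ℝ, F t * G t := by
    refine integral_congr_ae ?_
    filter_upwards with t
    exact (hFG t).symm
  -- compute the right-hand side of CS
  have hrpow2 : ∀ x : ℝ, x ^ (2:ℝ) = x ^ 2 := fun x => by
    rw [show (2:ℝ) = ((2:ℕ):ℝ) by norm_num, Real.rpow_natCast]
  have hI1 : ∫ t : ℝ, ‖g t‖ ^ 2 = N1 ^ 2 := by
    have := hg.eLpNorm_eq_integral_rpow_norm (by norm_num) (by norm_num)
    have h2 : (2:ℝ≥0∞).toReal = 2 := by norm_num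
    rw [h2] at this
    have hN1eq : N1 = (∫ t : ℝ, ‖g t‖ ^ (2:ℝ)) ^ (2:ℝ)⁻¹ := by
      rw [hN1def, this, ENNReal.toReal_ofReal (by positivity)]
    have hInn : 0 ≤ ∫ t : ℝ, ‖g t‖ ^ (2:ℝ) := by
      apply integral_nonneg; intro t; positivity
    rw [hN1eq, ← Real.rpow_natCast _ 2, ← Real.rpow_mul hInn]
    norm_num
  have hI2 : ∫ t : ℝ, ‖t • g t‖ ^ 2 = N2 ^ 2 := by
    have := htg.eLpNorm_eq_integral_rpow_norm (by norm_num) (by norm_num)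
    have h2 : (2:ℝ≥0∞).toReal = 2 := by norm_num
    rw [h2] at this
    have hN2eq : N2 = (∫ t : ℝ, ‖t • g t‖ ^ (2:ℝ)) ^ (2:ℝ)⁻¹ := by
      rw [hN2def, this, ENNReal.toReal_ofReal (by positivity)]
    have hInn : 0 ≤ ∫ t : ℝ, ‖t • g t‖ ^ (2:ℝ) := by
      apply integral_nonneg; intro t; positivity
    rw [hN2eq, ← Real.rpow_natCast _ 2, ← Real.rpow_mul hInn]
    norm_num
  have hFint : ∫ t : ℝ, F t ^ (2:ℝ) = 2 * N1 * N2 := by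
    rw [integral_congr_ae (Filter.Eventually.of_forall fun t => (hrpow2 (F t)))]
    rw [integral_congr_ae (Filter.Eventually.of_forall hFsq_eq)]
    rw [integral_add (hsqg.const_mul r) (hsqtg.const_mul r⁻¹), integral_const_mul,
      integral_const_mul, hI1, hI2, hrdef]
    field_simp
    ring
  have hGint : ∫ t : ℝ, G t ^ (2:ℝ) = Real.pi := by
    rw [integral_congr_ae (Filter.Eventually.of_forall fun t => (hrpow2 (G t)))]
    rw [integral_congr_ae (Filter.Eventually.of_forall hGsq_eq)]
    exact carlson_aux_integral hr
  rw [hLHS]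
  refine hCS.trans ?_
  rw [hFint, hGint]
  -- final arithmetic
  have h2pi : Real.sqrt (2 * Real.pi) = (2:ℝ) ^ ((1:ℝ)/2) * Real.pi ^ ((1:ℝ)/2) := by
    rw [Real.sqrt_eq_rpow, Real.mul_rpow (by norm_num) Real.pi_pos.le]
  rw [h2pi, Real.mul_rpow (by positivity) hN2nonneg,
    Real.mul_rpow (by norm_num) hN1nonneg]
  exact le_of_eq (by ring)
end

section
/- Let X be a Banach space, let (T(t))_{t≥0} be a strongly continuous semigroup on X with generator −A, and let S ∈ L(X) and C ≥ 0, k ≥ 1 be such that ‖Sx‖ ≤ C‖A^k x‖ for all x ∈ D(A^k). Then for every x ∈ D(A^{k−1}) with L := limsup_{t↓0} (1/t)‖T(t)A^{k−1}x − A^{k−1}x‖ < ∞, one has ‖Sx‖ ≤ C·L. -/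
open Filter Topology MeasureTheory intervalIntegral
open scoped ENNReal

/-- The generator `A` of the semigroup `T`, where `-A` is the infinitesimal generator:
`A x = -lim_{t↓0} t⁻¹ (T(t)x - x)`. -/
noncomputable def genA {X : Type*} [NormedAddCommGroup X] [NormedSpace ℝ X]
    (T : ℝ → X →L[ℝ] X) (x : X) : X :=
  -limUnder (𝓝[>] (0 : ℝ)) (fun t => t⁻¹ • (T t x - x))

/-- Membership in the domain of the generator. -/
def inDom {X : Type*} [NormedAddCommGroup X] [NormedSpace ℝ X]
    (T : ℝ → X →L[ℝ] X) (x : X) : Prop :=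
  ∃ y : X, Tendsto (fun t => t⁻¹ • (T t x - x)) (𝓝[>] (0 : ℝ)) (𝓝 y)

/-- Membership in the domain of the k-th power of the generator. -/
def inDomPow {X : Type*} [NormedAddCommGroup X] [NormedSpace ℝ X]
    (T : ℝ → X →L[ℝ] X) : ℕ → X → Prop
  | 0, _ => True
  | k + 1, x => inDom T x ∧ inDomPow T k (genA T x)

section Helpers

variable {X : Type*} [NormedAddCommGroup X] [NormedSpace ℝ X] [CompleteSpace X]
variable {T : ℝ → X →L[ℝ] X}

/-- Cesàro mean `t⁻¹ ∫_0^t T(s) z ds`. -/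
noncomputable def cesaro (T : ℝ → X →L[ℝ] X) (t : ℝ) (z : X) : X :=
  t⁻¹ • ∫ s in (0:ℝ)..t, T s z

lemma fav_intble (hTcont : ∀ x : X, ContinuousOn (fun t => T t x) (Set.Ici (0 : ℝ)))
    (z : X) {a b : ℝ} (ha : 0 ≤ a) (hb : 0 ≤ b) :
    IntervalIntegrable (fun s => T s z) volume a b := by
  apply ContinuousOn.intervalIntegrable
  apply (hTcont z).mono
  intro s hs
  exact le_trans (le_min ha hb) hs.1

lemma fav_genA_eq {z y : X}
    (h : Tendsto (fun t => t⁻¹ • (T t z - z)) (𝓝[>] (0:ℝ)) (𝓝 y)) : genA T z = -y := by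
  unfold genA
  rw [h.limUnder_eq]

lemma fav_tendsto_of_inDom {z : X} (hz : inDom T z) :
    Tendsto (fun t => t⁻¹ • (T t z - z)) (𝓝[>] (0:ℝ)) (𝓝 (-genA T z)) := by
  obtain ⟨y, hy⟩ := hz
  rw [fav_genA_eq hy, neg_neg]
  exact hy

/-- Averaging: `h⁻¹ ∫_t^{t+h} T(s)z ds → T(t)z` as `h ↓ 0`. -/
lemma fav_avg (hTcont : ∀ x : X, ContinuousOn (fun t => T t x) (Set.Ici (0 : ℝ)))
    (z : X) {t : ℝ} (ht : 0 ≤ t) :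
    Tendsto (fun h : ℝ => h⁻¹ • ∫ s in t..(t+h), T s z) (𝓝[>] (0:ℝ)) (𝓝 (T t z)) := by
  rw [Metric.tendsto_nhdsWithin_nhds]
  intro ε hε
  have hc : ContinuousWithinAt (fun s => T s z) (Set.Ici (0:ℝ)) t := hTcont z t ht
  rw [Metric.continuousWithinAt_iff] at hc
  obtain ⟨δ, hδ, hδ2⟩ := hc (ε/2) (by linarith)
  refine ⟨δ, hδ, ?_⟩
  intro h hh hhd
  have hh' : 0 < h := hh
  rw [Real.dist_eq, sub_zero, abs_of_pos hh'] at hhd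
  have hkey : ‖(∫ s in t..(t+h), T s z) - h • T t z‖ ≤ (ε/2) * h := by
    have he : (∫ s in t..(t+h), (T s z - T t z))
        = (∫ s in t..(t+h), T s z) - h • T t z := by
      rw [integral_sub (fav_intble hTcont z ht (by linarith)) intervalIntegrable_const,
        intervalIntegral.integral_const, show t + h - t = h by ring]
    rw [← he]
    have hb := intervalIntegral.norm_integral_le_of_norm_le_const
      (f := fun s => T s z - T t z) (C := ε/2) (a := t) (b := t+h) ?_
    · calc ‖∫ s in t..(t+h), (T s z - T t z)‖ ≤ (ε/2) * |t + h - t| := hb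
        _ = (ε/2) * h := by rw [show t + h - t = h by ring, abs_of_pos hh']
    · intro s hs
      rw [Set.uIoc_of_le (by linarith : t ≤ t + h)] at hs
      have hs0 : (0:ℝ) ≤ s := le_trans ht (le_of_lt hs.1)
      have hds : dist s t < δ := by
        rw [Real.dist_eq, abs_of_nonneg (by linarith [hs.1.le] : (0:ℝ) ≤ s - t)]
        linarith [hs.2]
      exact le_of_lt (by simpa [dist_eq_norm] using hδ2 hs0 hds)
  rw [dist_eq_norm]
  have he2 : h⁻¹ • (∫ s in t..(t+h), T s z) - T t z
      = h⁻¹ • ((∫ s in t..(t+h), T s z) - h • T t z) := by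
    rw [smul_sub, smul_smul, inv_mul_cancel₀ (ne_of_gt hh'), one_smul]
  rw [he2, norm_smul, norm_inv, Real.norm_eq_abs, abs_of_pos hh']
  calc h⁻¹ * ‖(∫ s in t..(t+h), T s z) - h • T t z‖ ≤ h⁻¹ * ((ε/2) * h) := by
        apply mul_le_mul_of_nonneg_left hkey (by positivity)
    _ = ε/2 := by field_simp
    _ < ε := by linarith

/-- The difference quotient of the Cesàro mean converges. -/
lemma fav_mean_tendsto (hT0 : T 0 = 1)
    (hTadd : ∀ s t : ℝ, 0 ≤ s → 0 ≤ t → T (s + t) = (T s).comp (T t))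
    (hTcont : ∀ x : X, ContinuousOn (fun t => T t x) (Set.Ici (0 : ℝ)))
    (z : X) {t : ℝ} (ht : 0 < t) :
    Tendsto (fun h : ℝ => h⁻¹ • (T h (cesaro T t z) - cesaro T t z)) (𝓝[>] (0:ℝ))
      (𝓝 (t⁻¹ • (T t z - z))) := by
  have hmain : Tendsto (fun h : ℝ => t⁻¹ • ((h⁻¹ • ∫ s in t..(t+h), T s z)
      - (h⁻¹ • ∫ s in (0:ℝ)..(0+h), T s z))) (𝓝[>] (0:ℝ)) (𝓝 (t⁻¹ • (T t z - z))) := by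
    have h1 := fav_avg hTcont z (le_refl (0:ℝ))
    have h2 := fav_avg hTcont z ht.le
    have h3 := (h2.sub h1).const_smul (t⁻¹)
    rw [hT0] at h3
    simpa using h3
  apply hmain.congr'
  filter_upwards [self_mem_nhdsWithin] with h hh
  have hh' : (0:ℝ) < h := hh
  have e1 : T h (cesaro T t z) = t⁻¹ • ∫ s in h..(t+h), T s z := by
    unfold cesaro
    rw [ContinuousLinearMap.map_smul, ← (T h).intervalIntegral_comp_comm (fav_intble hTcont z le_rfl ht.le)]
    congr 1
    calc (∫ s in (0:ℝ)..t, T h (T s z)) = ∫ s in (0:ℝ)..t, T (s + h) z := by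
          apply intervalIntegral.integral_congr
          intro s hs
          rw [Set.uIcc_of_le ht.le] at hs
          show T h (T s z) = T (s + h) z
          rw [add_comm s h, hTadd h s hh'.le hs.1]
          rfl
      _ = ∫ s in (0:ℝ)+h..t+h, T s z :=
          intervalIntegral.integral_comp_add_right (f := fun u => T u z) h
      _ = ∫ s in h..(t+h), T s z := by rw [zero_add]
  have hint1 : IntervalIntegrable (fun s => T s z) volume 0 h := fav_intble hTcont z le_rfl hh'.le
  have hint2 : IntervalIntegrable (fun s => T s z) volume h (t+h) :=
    fav_intble hTcont z hh'.le (by linarith)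
  have hint3 : IntervalIntegrable (fun s => T s z) volume 0 t := fav_intble hTcont z le_rfl ht.le
  have hint4 : IntervalIntegrable (fun s => T s z) volume t (t+h) :=
    fav_intble hTcont z ht.le (by linarith)
  have e2 : (∫ s in h..(t+h), T s z) - ∫ s in (0:ℝ)..t, T s z
      = (∫ s in t..(t+h), T s z) - ∫ s in (0:ℝ)..h, T s z := by
    rw [sub_eq_sub_iff_add_eq_add]
    have a1 := integral_add_adjacent_intervals hint1 hint2
    have a2 := integral_add_adjacent_intervals hint3 hint4
    rw [add_comm ((∫ s in h..(t+h), T s z)) ((∫ s in (0:ℝ)..h, T s z)), a1,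
      add_comm ((∫ s in t..(t+h), T s z)) ((∫ s in (0:ℝ)..t, T s z)), a2]
  have e3 : h⁻¹ • (T h (cesaro T t z) - cesaro T t z)
      = t⁻¹ • ((h⁻¹ • ∫ s in t..(t+h), T s z) - h⁻¹ • ∫ s in (0:ℝ)..(0+h), T s z) := by
    rw [e1, zero_add]
    show h⁻¹ • (t⁻¹ • (∫ s in h..(t+h), T s z) - t⁻¹ • ∫ s in (0:ℝ)..t, T s z) = _
    rw [← smul_sub t⁻¹, e2, smul_comm h⁻¹ t⁻¹, ← smul_sub h⁻¹]
  exact e3.symm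

lemma fav_inDom_cesaro (hT0 : T 0 = 1)
    (hTadd : ∀ s t : ℝ, 0 ≤ s → 0 ≤ t → T (s + t) = (T s).comp (T t))
    (hTcont : ∀ x : X, ContinuousOn (fun t => T t x) (Set.Ici (0 : ℝ)))
    (z : X) {t : ℝ} (ht : 0 < t) : inDom T (cesaro T t z) :=
  ⟨_, fav_mean_tendsto hT0 hTadd hTcont z ht⟩

lemma fav_genA_cesaro (hT0 : T 0 = 1)
    (hTadd : ∀ s t : ℝ, 0 ≤ s → 0 ≤ t → T (s + t) = (T s).comp (T t))
    (hTcont : ∀ x : X, ContinuousOn (fun t => T t x) (Set.Ici (0 : ℝ)))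
    (z : X) {t : ℝ} (ht : 0 < t) :
    genA T (cesaro T t z) = -(t⁻¹ • (T t z - z)) :=
  fav_genA_eq (fav_mean_tendsto hT0 hTadd hTcont z ht)

/-- FTC: for `z ∈ D(A)`, `∫_0^t T(s)(Az) ds = z - T(t)z`. -/
lemma fav_FTC (hT0 : T 0 = 1)
    (hTadd : ∀ s t : ℝ, 0 ≤ s → 0 ≤ t → T (s + t) = (T s).comp (T t))
    (hTcont : ∀ x : X, ContinuousOn (fun t => T t x) (Set.Ici (0 : ℝ)))
    {z : X} (hz : inDom T z) {t : ℝ} (ht : 0 ≤ t) :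
    ∫ s in (0:ℝ)..t, T s (genA T z) = z - T t z := by
  have hderiv : ∀ s ∈ Set.Ioo (0:ℝ) t,
      HasDerivWithinAt (fun u => T u z) (-(T s (genA T z))) (Set.Ioi s) s := by
    intro s hs
    rw [hasDerivWithinAt_iff_tendsto_slope,
      Set.diff_singleton_eq_self (by simp : s ∉ Set.Ioi s)]
    have hsub : Tendsto (fun u : ℝ => u - s) (𝓝[Set.Ioi s] s) (𝓝[>] (0:ℝ)) := by
      rw [tendsto_nhdsWithin_iff]
      constructor
      · have hts : Tendsto (fun u : ℝ => u - s) (𝓝 s) (𝓝 (s - s)) :=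
          (continuous_id.sub continuous_const).tendsto s
        rw [sub_self] at hts
        exact hts.mono_left nhdsWithin_le_nhds
      · filter_upwards [self_mem_nhdsWithin] with u hu
        exact sub_pos.mpr (Set.mem_Ioi.mp hu)
    have hcom : Tendsto (fun h : ℝ => h⁻¹ • (T (s + h) z - T s z)) (𝓝[>] (0:ℝ))
        (𝓝 (-(T s (genA T z)))) := by
      have hc := ((T s).continuous.tendsto _).comp (fav_tendsto_of_inDom hz)
      rw [map_neg] at hc
      apply hc.congr'
      filter_upwards [self_mem_nhdsWithin] with h hh
      have hh' : (0:ℝ) < h := hh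
      simp only [Function.comp_apply]
      rw [ContinuousLinearMap.map_smul, map_sub, hTadd s h hs.1.le hh'.le]
      rfl
    have := hcom.comp hsub
    apply this.congr
    intro u
    simp only [Function.comp_apply, slope, vsub_eq_sub]
    rw [show s + (u - s) = u by ring]
  have hcont : ContinuousOn (fun u => T u z) (Set.Icc 0 t) :=
    (hTcont z).mono Set.Icc_subset_Ici_self
  have hint : IntervalIntegrable (fun s => -(T s (genA T z))) volume 0 t :=
    (fav_intble hTcont (genA T z) le_rfl ht).neg
  have hftc := integral_eq_sub_of_hasDeriv_right_of_le ht hcont hderiv hint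
  rw [hT0] at hftc
  simp only [ContinuousLinearMap.one_apply] at hftc
  rw [intervalIntegral.integral_neg] at hftc
  rw [← neg_neg (∫ s in (0:ℝ)..t, T s (genA T z)), hftc, neg_sub]

lemma fav_genA_mean (hT0 : T 0 = 1)
    (hTadd : ∀ s t : ℝ, 0 ≤ s → 0 ≤ t → T (s + t) = (T s).comp (T t))
    (hTcont : ∀ x : X, ContinuousOn (fun t => T t x) (Set.Ici (0 : ℝ)))
    {z : X} (hz : inDom T z) {t : ℝ} (ht : 0 < t) :
    genA T (cesaro T t z) = cesaro T t (genA T z) := by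
  rw [fav_genA_cesaro hT0 hTadd hTcont z ht]
  unfold cesaro
  rw [fav_FTC hT0 hTadd hTcont hz ht.le, ← smul_neg]
  congr 1
  abel

lemma fav_pow (hT0 : T 0 = 1)
    (hTadd : ∀ s t : ℝ, 0 ≤ s → 0 ≤ t → T (s + t) = (T s).comp (T t))
    (hTcont : ∀ x : X, ContinuousOn (fun t => T t x) (Set.Ici (0 : ℝ))) :
    ∀ (j : ℕ) (z : X), inDomPow T j z → ∀ {t : ℝ}, 0 < t →
      inDomPow T (j+1) (cesaro T t z) ∧
      (genA T)^[j+1] (cesaro T t z)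
        = -(t⁻¹ • (T t ((genA T)^[j] z) - (genA T)^[j] z)) := by
  intro j
  induction j with
  | zero =>
    intro z _ t ht
    refine ⟨⟨fav_inDom_cesaro hT0 hTadd hTcont z ht, trivial⟩, ?_⟩
    simpa using fav_genA_cesaro hT0 hTadd hTcont z ht
  | succ n ih =>
    intro z hz t ht
    obtain ⟨hz1, hz2⟩ := hz
    have hA : genA T (cesaro T t z) = cesaro T t (genA T z) :=
      fav_genA_mean hT0 hTadd hTcont hz1 ht
    have h2 := ih (genA T z) hz2 ht
    refine ⟨⟨fav_inDom_cesaro hT0 hTadd hTcont z ht, ?_⟩, ?_⟩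
    · rw [hA]; exact h2.1
    · rw [Function.iterate_succ_apply, hA, Function.iterate_succ_apply (genA T) n z]
      exact h2.2

lemma fav_cesaro_tendsto (hT0 : T 0 = 1)
    (hTcont : ∀ x : X, ContinuousOn (fun t => T t x) (Set.Ici (0 : ℝ)))
    (z : X) :
    Tendsto (fun t : ℝ => cesaro T t z) (𝓝[>] (0:ℝ)) (𝓝 z) := by
  have h := fav_avg hTcont z (le_refl (0:ℝ))
  rw [hT0] at h
  simp only [zero_add] at h
  simpa [cesaro] using h

end Helpers

/-- Favard space estimate: a bound `‖Sx‖ ≤ C‖A^k x‖` on `D(A^k)` extends to the k-th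
Favard space, with `‖A^k x‖` replaced by `limsup_{t↓0} t⁻¹‖T(t)A^{k-1}x - A^{k-1}x‖`. -/
theorem favard_estimate {X : Type*} [NormedAddCommGroup X] [NormedSpace ℝ X]
    [CompleteSpace X]
    (T : ℝ → X →L[ℝ] X) (hT0 : T 0 = 1)
    (hTadd : ∀ s t : ℝ, 0 ≤ s → 0 ≤ t → T (s + t) = (T s).comp (T t))
    (hTcont : ∀ x : X, ContinuousOn (fun t => T t x) (Set.Ici (0 : ℝ)))
    (S : X →L[ℝ] X) (C : ℝ) (hC : 0 ≤ C) (k : ℕ) (hk : 1 ≤ k)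
    (hS : ∀ x : X, inDomPow T k x → ‖S x‖ ≤ C * ‖(genA T)^[k] x‖)
    (x : X) (hx : inDomPow T (k - 1) x)
    (L : ℝ≥0∞)
    (hLdef : L = Filter.limsup
      (fun t : ℝ => ENNReal.ofReal (t⁻¹ * ‖T t ((genA T)^[k - 1] x) - (genA T)^[k - 1] x‖))
      (𝓝[>] (0 : ℝ)))
    (hLfin : L ≠ ⊤) :
    ‖S x‖ ≤ C * L.toReal := by
  obtain ⟨n, rfl⟩ : ∃ n, k = n + 1 := ⟨k - 1, (Nat.succ_pred_eq_of_pos hk).symm⟩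
  simp only [Nat.add_sub_cancel] at hx hLdef
  set y := (genA T)^[n] x with hy
  -- the key pointwise estimate
  have key : ∀ᶠ t in 𝓝[>] (0:ℝ), ‖S (cesaro T t x)‖ ≤ C * (t⁻¹ * ‖T t y - y‖) := by
    filter_upwards [self_mem_nhdsWithin] with t ht
    have ht' : (0:ℝ) < t := ht
    have h := fav_pow hT0 hTadd hTcont n x hx ht'
    have hb := hS _ h.1
    rw [h.2] at hb
    rw [norm_neg, norm_smul, norm_inv, Real.norm_eq_abs, abs_of_pos ht'] at hb
    exact hb
  have hconv : Tendsto (fun t : ℝ => ‖S (cesaro T t x)‖) (𝓝[>] (0:ℝ)) (𝓝 ‖S x‖) := by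
    have h1 := fav_cesaro_tendsto hT0 hTcont x
    exact (continuous_norm.tendsto _).comp ((S.continuous.tendsto _).comp h1)
  have main : ∀ ε : ℝ, 0 < ε → ‖S x‖ ≤ C * (L.toReal + ε) := by
    intro ε hε
    have hlt : L < L + ENNReal.ofReal ε :=
      ENNReal.lt_add_right hLfin (by simp [hε, ne_of_gt])
    have hlt2 : Filter.limsup
        (fun t : ℝ => ENNReal.ofReal (t⁻¹ * ‖T t y - y‖)) (𝓝[>] (0:ℝ))
        < L + ENNReal.ofReal ε := by
      rw [← hLdef]; exact hlt
    have hev := Filter.eventually_lt_of_limsup_lt hlt2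
    have hbd : ∀ᶠ t in 𝓝[>] (0:ℝ), ‖S (cesaro T t x)‖ ≤ C * (L.toReal + ε) := by
      filter_upwards [key, hev, self_mem_nhdsWithin] with t hkey hevt ht
      have ht' : (0:ℝ) < t := ht
      have hnn : 0 ≤ t⁻¹ * ‖T t y - y‖ := by positivity
      have hle : t⁻¹ * ‖T t y - y‖ ≤ L.toReal + ε := by
        have h1 : (ENNReal.ofReal (t⁻¹ * ‖T t y - y‖)).toReal
            ≤ (L + ENNReal.ofReal ε).toReal :=
          ENNReal.toReal_mono (by simp [hLfin, ENNReal.add_ne_top]) hevt.le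
        rwa [ENNReal.toReal_ofReal hnn,
          ENNReal.toReal_add hLfin ENNReal.ofReal_ne_top,
          ENNReal.toReal_ofReal hε.le] at h1
      calc ‖S (cesaro T t x)‖ ≤ C * (t⁻¹ * ‖T t y - y‖) := hkey
        _ ≤ C * (L.toReal + ε) := mul_le_mul_of_nonneg_left hle hC
    exact le_of_tendsto hconv hbd
  -- conclude
  by_contra hcon
  push_neg at hcon
  set ε := (‖S x‖ - C * L.toReal) / (C + 1) with hεdef
  have hε : 0 < ε := by
    apply div_pos (by linarith) (by linarith)
  have hmain := main ε hε
  rw [mul_add] at hmain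
  have hεg : ε * (C + 1) = ‖S x‖ - C * L.toReal := by
    rw [hεdef]
    field_simp
  nlinarith [hmain, hεg, hε, hcon]
end
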